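/- Let $p$ be a prime with $p \equiv 5 \pmod 6$, let $d \in \mathrm{GF}(p)$ be a nonzero square, and let $b \in \mathrm{GF}(p)$. Set $j = -(d + 27b^2) \cdot 4^{-1}$ and $a = j^{(2p-1)/3}$ in $\mathrm{GF}(p)$, and let $f(X) = X^3 + aX + b$. If $f$ is irreducible over $\mathrm{GF}(p)$, and $X^p \equiv c_2 X^2 + c_1 X + c_0 \pmod{f(X)}$, then $c_2 \ne 0$ and the element $t = 3a \cdot c_2^{-1}$ satisfies $t^2 = d$ in $\mathrm{GF}(p)$; that is, the output of the $\mathrm{GF}(p^3)$ square root algorithm on input $(d, b, p)$ is a square root of $d$ modulo $p$ whenever $f$ is irreducible. -/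

import Mathlib

open Polynomial

set_option maxHeartbeats 1600000 in
/-- **Correctness of the GF(p³) square root algorithm** for `p ≡ 5 (mod 6)`: with
`j = -(d + 27b²)·4⁻¹`, `a = j^((2p-1)/3)` and `f = X³ + aX + b`, if `f` is irreducible
over `GF(p)` and `X^p ≡ c₂X² + c₁X + c₀ (mod f)`, then `c₂ ≠ 0` and
`t = 3a·c₂⁻¹` satisfies `t² = d`. -/
theorem gfp3_sqrt_algorithm_correct (p : ℕ) (hp : p.Prime) (hp6 : p % 6 = 5)
    (d : ZMod p) (hd : IsSquare d) (hd0 : d ≠ 0) (b : ZMod p)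
    (j a : ZMod p) (hj : j = -(d + 27 * b ^ 2) * (4 : ZMod p)⁻¹)
    (ha : a = j ^ ((2 * p - 1) / 3))
    (f : (ZMod p)[X]) (hf : f = X ^ 3 + C a * X + C b)
    (hirr : Irreducible f)
    (c₀ c₁ c₂ : ZMod p)
    (hrem : (X : (ZMod p)[X]) ^ p %ₘ f = C c₂ * X ^ 2 + C c₁ * X + C c₀) :
    c₂ ≠ 0 ∧ (3 * a * c₂⁻¹) ^ 2 = d := by
  haveI : Fact p.Prime := ⟨hp⟩
  have hp1 : 1 < p := hp.one_lt
  -- basic nonzero numerals in ZMod p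
  have hnat : ∀ n : ℕ, ¬ p ∣ n → ((n : ℕ) : ZMod p) ≠ 0 := by
    intro n hn h
    exact hn ((ZMod.natCast_eq_zero_iff n p).mp h)
  have h2 : (2 : ZMod p) ≠ 0 := by
    have := hnat 2 (by intro h; have := Nat.le_of_dvd (by norm_num) h; omega)
    simpa using this
  have h3 : (3 : ZMod p) ≠ 0 := by
    have := hnat 3 (by intro h; have := Nat.le_of_dvd (by norm_num) h; omega)
    simpa using this
  have h4 : (4 : ZMod p) ≠ 0 := by
    have := hnat 4 (by
      intro h
      have h5 : p ≤ 4 := Nat.le_of_dvd (by norm_num) h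
      interval_cases p <;> omega)
    simpa using this
  -- cube root lemma
  have hcube : ∀ x : ZMod p, (x ^ ((2 * p - 1) / 3)) ^ 3 = x := by
    intro x
    rw [← pow_mul]
    have h3' : (2 * p - 1) / 3 * 3 = 2 * p - 1 := by omega
    rw [h3']
    rcases eq_or_ne x 0 with hx | hx
    · subst hx; rw [zero_pow (by omega)]
    · have h1 : 2 * p - 1 = (p - 1) * 2 + 1 := by omega
      rw [h1, pow_add, pow_mul, ZMod.pow_card_sub_one_eq_one hx, one_pow, pow_one, one_mul]
  have ha3 : a ^ 3 = j := by rw [ha]; exact hcube j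
  have hdisc : d = -(4 * a ^ 3 + 27 * b ^ 2) := by
    have h4j : 4 * j = -(d + 27 * b ^ 2) := by
      rw [hj]; field_simp
    linear_combination h4j + 4 * ha3
  have hmonic : f.Monic := by
    rw [hf]; monicity!
  have hdeg : f.natDegree = 3 := by
    rw [hf]; compute_degree!
  have hf0 : f ≠ 0 := hmonic.ne_zero
  have hdegd : f.degree = 3 := by rw [degree_eq_natDegree hf0, hdeg]; rfl
  haveI := Fact.mk hirr
  -- an irreducible cubic has no root fixed by Frobenius
  have key : ∀ r : AdjoinRoot f, (Polynomial.aeval r) f = 0 → r ^ p ≠ r := by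
    intro r hr hrp
    have hmin : minpoly (ZMod p) r = f :=
      (minpoly.eq_of_irreducible_of_monic hirr hr hmonic).symm
    have hdvd : f ∣ (X : (ZMod p)[X]) ^ p - X := by
      rw [← hmin]
      apply minpoly.dvd
      simp [map_pow, hrp]
    have hroots : ((X : (ZMod p)[X]) ^ p - X).roots = Finset.univ.val := by
      have hq : (Fintype.card (ZMod p)) = p := ZMod.card p
      have h := FiniteField.roots_X_pow_card_sub_X (ZMod p)
      rwa [hq] at h
    have hndeg : ((X : (ZMod p)[X]) ^ p - X).natDegree = p :=
      FiniteField.X_pow_card_sub_X_natDegree_eq _ hp1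
    have hcardroots : ((X : (ZMod p)[X]) ^ p - X).roots.card
        = ((X : (ZMod p)[X]) ^ p - X).natDegree := by
      rw [hroots, hndeg]
      simp [ZMod.card p]
    have hgmonic : ((X : (ZMod p)[X]) ^ p - X).Monic := by
      apply monic_X_pow_sub; rw [degree_X]; exact_mod_cast hp1
    have hprod := prod_multiset_X_sub_C_of_monic_of_roots_card_eq hgmonic hcardroots
    have hfp : Prime f := UniqueFactorizationMonoid.irreducible_iff_prime.mp hirr
    rw [← hprod] at hdvd
    obtain ⟨g, hgmem, hfg⟩ := hfp.exists_mem_multiset_dvd hdvd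
    obtain ⟨c, _, rfl⟩ := Multiset.mem_map.mp hgmem
    have hle := degree_le_of_dvd hfg (X_sub_C_ne_zero c)
    rw [hdegd, degree_X_sub_C] at hle
    norm_num at hle
  -- a is nonzero
  have ha0 : a ≠ 0 := by
    intro h0
    have hr : ((-b) ^ ((2 * p - 1) / 3)) ^ 3 = -b := hcube (-b)
    have hroot : f.IsRoot ((-b) ^ ((2 * p - 1) / 3)) := by
      rw [hf]
      simp only [IsRoot.def, eval_add, eval_pow, eval_mul, eval_X, eval_C, h0]
      rw [hr]; ring
    obtain ⟨g, hg⟩ := dvd_iff_isRoot.mpr hroot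
    rcases hirr.isUnit_or_isUnit hg with hu | hu
    · exact not_isUnit_X_sub_C _ hu
    · have hgd : g.degree = 0 := degree_eq_zero_of_isUnit hu
      have hd1 : f.degree = 1 := by
        rw [hg, degree_mul, degree_X_sub_C, hgd, add_zero]
      rw [hdegd] at hd1; norm_num at hd1
  -- setup of K = AdjoinRoot f
  let pb := AdjoinRoot.powerBasis hf0
  haveI : Module.Finite (ZMod p) (AdjoinRoot f) := pb.finite
  haveI : Finite (AdjoinRoot f) := Module.finite_of_finite (ZMod p)
  letI : Fintype (AdjoinRoot f) := Fintype.ofFinite _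
  have hcard : Fintype.card (AdjoinRoot f) = p ^ 3 := by
    rw [Module.card_fintype pb.basis, ZMod.card, Fintype.card_fin]
    have hdim : pb.dim = 3 := hdeg
    rw [hdim]
  have hinj : Function.Injective (algebraMap (ZMod p) (AdjoinRoot f)) :=
    (algebraMap (ZMod p) (AdjoinRoot f)).injective
  haveI : CharP (AdjoinRoot f) p := charP_of_injective_algebraMap hinj p
  set α : AdjoinRoot f := AdjoinRoot.root f with hαdef
  obtain ⟨A, hAdef⟩ : ∃ x, algebraMap (ZMod p) (AdjoinRoot f) a = x := ⟨_, rfl⟩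
  obtain ⟨B, hBdef⟩ : ∃ x, algebraMap (ZMod p) (AdjoinRoot f) b = x := ⟨_, rfl⟩
  obtain ⟨C0, hC0def⟩ : ∃ x, algebraMap (ZMod p) (AdjoinRoot f) c₀ = x := ⟨_, rfl⟩
  obtain ⟨C1, hC1def⟩ : ∃ x, algebraMap (ZMod p) (AdjoinRoot f) c₁ = x := ⟨_, rfl⟩
  obtain ⟨C2, hC2def⟩ : ∃ x, algebraMap (ZMod p) (AdjoinRoot f) c₂ = x := ⟨_, rfl⟩
  have hmapC : ∀ x : ZMod p,
      (algebraMap (ZMod p) (AdjoinRoot f) x) ^ p = algebraMap (ZMod p) (AdjoinRoot f) x := by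
    intro x; rw [← map_pow, ZMod.pow_card]
  have hAp : A ^ p = A := by rw [← hAdef]; exact hmapC a
  have hBp : B ^ p = B := by rw [← hBdef]; exact hmapC b
  have hC0p : C0 ^ p = C0 := by rw [← hC0def]; exact hmapC c₀
  have hC1p : C1 ^ p = C1 := by rw [← hC1def]; exact hmapC c₁
  have hC2p : C2 ^ p = C2 := by rw [← hC2def]; exact hmapC c₂
  have hpadd : ∀ x y : AdjoinRoot f, (x + y) ^ p = x ^ p + y ^ p := by
    intro x y; exact add_pow_char ..
  have hcomm : ∀ (x : AdjoinRoot f) (n : ℕ), (x ^ n) ^ p = (x ^ p) ^ n := by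
    intro x n; rw [← pow_mul, mul_comm, pow_mul]
  have hp0 : (0 : AdjoinRoot f) ^ p = 0 := zero_pow (by omega)
  have haroot : (aeval α) f = 0 := by
    rw [AdjoinRoot.aeval_eq]; exact AdjoinRoot.mk_self
  have E1 : α ^ 3 + A * α + B = 0 := by
    have h := congrArg (aeval α) hf
    simp only [map_add, map_mul, map_pow, aeval_X, aeval_C] at h
    rw [haroot, hAdef, hBdef] at h
    linear_combination -h
  have Eβ : (α ^ p) ^ 3 + A * α ^ p + B = 0 := by
    have h := congrArg (fun z : AdjoinRoot f => z ^ p) E1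
    simp only [hp0] at h
    rw [hpadd, hpadd, mul_pow, hcomm, hAp, hBp] at h
    exact h
  have Eγ : ((α ^ p) ^ p) ^ 3 + A * (α ^ p) ^ p + B = 0 := by
    have h := congrArg (fun z : AdjoinRoot f => z ^ p) Eβ
    simp only [hp0] at h
    rw [hpadd, hpadd, mul_pow, hcomm, hAp, hBp] at h
    exact h
  obtain ⟨β, hβdef⟩ : ∃ x, (α : AdjoinRoot f) ^ p = x := ⟨_, rfl⟩
  obtain ⟨γ, hγdef⟩ : ∃ x, β ^ p = x := ⟨_, rfl⟩
  rw [hβdef] at Eβ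
  rw [hβdef, hγdef] at Eγ
  have hγp : γ ^ p = α := by
    have h1 : γ ^ p = α ^ (p ^ 3) := by
      rw [← hγdef, ← hβdef, ← pow_mul, ← pow_mul]
      congr 1
      ring
    rw [h1, ← hcard]
    exact FiniteField.pow_card α
  -- roots are pairwise distinct
  have hβroot : (aeval β) f = 0 := by
    have h := congrArg (aeval β) hf
    simp only [map_add, map_mul, map_pow, aeval_X, aeval_C] at h
    rw [hAdef, hBdef] at h
    rw [h]
    linear_combination Eβ
  have hαβ : α ≠ β := by
    intro h
    exact key α haroot (by rw [hβdef, ← h])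
  have hβγ : β ≠ γ := by
    intro h
    exact key β hβroot (by rw [hγdef, ← h])
  have hαγ : α ≠ γ := by
    intro h
    apply key α haroot
    have h' := congrArg (fun z : AdjoinRoot f => z ^ p) h
    simp only [hγp] at h'
    rw [hβdef] at h'
    rw [hβdef]
    exact h'
  -- symmetric function relations
  have Rαβ : α ^ 2 + α * β + β ^ 2 + A = 0 := by
    have h : (α - β) * (α ^ 2 + α * β + β ^ 2 + A) = 0 := by linear_combination E1 - Eβ
    rcases mul_eq_zero.mp h with h' | h'
    · exact absurd (sub_eq_zero.mp h') hαβ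
    · exact h'
  have Rαγ : α ^ 2 + α * γ + γ ^ 2 + A = 0 := by
    have h : (α - γ) * (α ^ 2 + α * γ + γ ^ 2 + A) = 0 := by linear_combination E1 - Eγ
    rcases mul_eq_zero.mp h with h' | h'
    · exact absurd (sub_eq_zero.mp h') hαγ
    · exact h'
  have hsum : γ = -α - β := by
    have h : (β - γ) * (α + β + γ) = 0 := by linear_combination Rαβ - Rαγ
    rcases mul_eq_zero.mp h with h' | h'
    · exact absurd (sub_eq_zero.mp h') hβγ
    · linear_combination h'
  have h2K : (2 : AdjoinRoot f) ≠ 0 := by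
    intro h
    apply h2
    apply hinj
    rw [map_ofNat, map_zero]
    exact_mod_cast h
  have hQ : α * β * (α + β) = B := by
    apply mul_left_cancel₀ h2K
    linear_combination -E1 - Eβ + (α + β) * Rαβ
  -- the Frobenius linear relations
  have h3v : β = C2 * α ^ 2 + C1 * α + C0 := by
    have hmod : AdjoinRoot.mk f ((X : (ZMod p)[X]) ^ p %ₘ f) = α ^ p := by
      rw [Polynomial.modByMonic_eq_sub_mul_div _ f]
      simp only [map_sub, map_mul, map_pow, AdjoinRoot.mk_self, AdjoinRoot.mk_X, zero_mul,
        sub_zero]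
      rfl
    rw [← hβdef, ← hmod, hrem]
    simp only [map_add, map_mul, map_pow, AdjoinRoot.mk_X, AdjoinRoot.mk_C]
    rw [← hC2def, ← hC1def, ← hC0def, AdjoinRoot.algebraMap_eq]
  have h4v : γ = C2 * β ^ 2 + C1 * β + C0 := by
    have h := congrArg (fun z : AdjoinRoot f => z ^ p) h3v
    rw [hγdef, hpadd, hpadd, mul_pow, mul_pow, hcomm, hC2p, hC1p, hC0p, hβdef] at h
    exact h
  have h5v : α = C2 * γ ^ 2 + C1 * γ + C0 := by
    have h := congrArg (fun z : AdjoinRoot f => z ^ p) h4v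
    rw [hγp, hpadd, hpadd, mul_pow, mul_pow, hcomm, hC2p, hC1p, hC0p, hγdef] at h
    exact h
  rw [hsum] at h4v h5v
  -- trace identities
  have hT0 : 3 * C0 = 2 * A * C2 := by
    linear_combination -h3v - h4v - h5v - 2 * C2 * Rαβ
  have hT1 : A = -3 * B * C2 - 2 * A * C1 := by
    linear_combination α * h3v + β * h4v + (-α - β) * h5v + (1 + 2 * C1) * Rαβ - 3 * C2 * hQ
  have hu : α ^ 2 * β + β ^ 2 * (-α - β) + (α + β) ^ 2 * α
      = 2 * A ^ 2 * C2 - 3 * B * C1 - 2 * A * C0 := by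
    linear_combination α ^ 2 * h3v + β ^ 2 * h4v + (α + β) ^ 2 * h5v
      + (2 * C2 * (α ^ 2 + α * β + β ^ 2 - A) + 2 * C0) * Rαβ - 3 * C1 * hQ
  have hT3 : 3 * A * (2 * (α ^ 2 * β + β ^ 2 * (-α - β) + (α + β) ^ 2 * α) - 3 * B)
      = (4 * A ^ 3 + 27 * B ^ 2) * C2 := by
    linear_combination 6 * A * hu - 9 * B * hT1 - 4 * A ^ 2 * hT0
  have hW2 : (2 * (α ^ 2 * β + β ^ 2 * (-α - β) + (α + β) ^ 2 * α) - 3 * B) ^ 2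
      = -(4 * A ^ 3 + 27 * B ^ 2) := by
    have hA2 : A = -(α ^ 2 + α * β + β ^ 2) := by linear_combination Rαβ
    have hB2 : B = α * β * (α + β) := hQ.symm
    rw [hA2, hB2]; ring
  have hfinal : 9 * A ^ 2 * (4 * A ^ 3 + 27 * B ^ 2)
      = -((4 * A ^ 3 + 27 * B ^ 2) ^ 2 * C2 ^ 2) := by
    linear_combination -(3 * A * (2 * (α ^ 2 * β + β ^ 2 * (-α - β) + (α + β) ^ 2 * α) - 3 * B)
        + (4 * A ^ 3 + 27 * B ^ 2) * C2) * hT3 + 9 * A ^ 2 * hW2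
  -- transfer back to ZMod p
  have hZ : 9 * a ^ 2 * (4 * a ^ 3 + 27 * b ^ 2)
      = -((4 * a ^ 3 + 27 * b ^ 2) ^ 2 * c₂ ^ 2) := by
    apply hinj
    push_cast [map_mul, map_add, map_pow, map_neg, map_ofNat, hAdef, hBdef, hC2def]
    convert hfinal using 2
  have hDne : (4 * a ^ 3 + 27 * b ^ 2) ≠ 0 := by
    intro h
    apply hd0
    rw [hdisc, h, neg_zero]
  have hkey : 9 * a ^ 2 = d * c₂ ^ 2 := by
    apply mul_right_cancel₀ hDne
    linear_combination hZ - c₂ ^ 2 * (4 * a ^ 3 + 27 * b ^ 2) * hdisc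
  have hc2 : c₂ ≠ 0 := by
    intro h
    rw [h] at hkey
    have h9 : (9 : ZMod p) * a ^ 2 = 0 := by linear_combination hkey
    rcases mul_eq_zero.mp h9 with h' | h'
    · have : (3 : ZMod p) * 3 = 0 := by linear_combination h'
      rcases mul_eq_zero.mp this with h'' | h'' <;> exact h3 h''
    · exact ha0 (sq_eq_zero_iff.mp h')
  refine ⟨hc2, ?_⟩
  field_simp
  linear_combination hkey
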